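/- Let B = [[α, r], [0, β]] ∈ ℂ^{2×2} with r ≠ 0. Then for every λ ∈ ℂ, the two singular values of λI − B are distinct; equivalently, the two eigenvalues of the Hermitian matrix (λI − B)ᴴ(λI − B) are distinct for every λ ∈ ℂ. (In particular, the matrix B has no fault points.) -/

import Mathlib

open Matrix

/-- The eigenvalues (squares of the singular values) of `λI - B`, i.e. the eigenvalues
of the Hermitian matrix `(λI - B)ᴴ (λI - B)`, counted with multiplicity. -/
noncomputable def sqSingVals {n : ℕ} (B : Matrix (Fin n) (Fin n) ℂ) (lam : ℂ) :
    Fin n → ℝ :=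
  (Matrix.isHermitian_conjTranspose_mul_self
    (lam • (1 : Matrix (Fin n) (Fin n) ℂ) - B)).eigenvalues

lemma herm_const (A : Matrix (Fin 2) (Fin 2) ℂ) (hA : A.IsHermitian)
    (h : hA.eigenvalues 0 = hA.eigenvalues 1) :
    A = ((hA.eigenvalues 0 : ℝ) : ℂ) • 1 := by
  have hd : diagonal (RCLike.ofReal ∘ hA.eigenvalues)
      = ((hA.eigenvalues 0 : ℝ) : ℂ) • (1 : Matrix (Fin 2) (Fin 2) ℂ) := by
    ext i j
    fin_cases i <;> fin_cases j <;> simp [h, Matrix.one_apply]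
  calc A = (hA.eigenvectorUnitary : Matrix (Fin 2) (Fin 2) ℂ)
        * diagonal (RCLike.ofReal ∘ hA.eigenvalues)
        * (star (hA.eigenvectorUnitary : Matrix (Fin 2) (Fin 2) ℂ)) := hA.spectral_theorem
    _ = ((hA.eigenvalues 0 : ℝ) : ℂ) • 1 := by
        rw [hd, Matrix.mul_smul, smul_mul_assoc, mul_one,
          (Matrix.mem_unitaryGroup_iff).mp hA.eigenvectorUnitary.2]

/-- For `B = [[α, r], [0, β]]` with `r ≠ 0`, the two singular values of `λI - B` are
distinct for every `λ ∈ ℂ`: the two eigenvalues of `(λI - B)ᴴ (λI - B)` differ.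
(In particular `B` has no fault points.) -/
theorem two_by_two_triangular_no_fault_points
    (α β r : ℂ) (hr : r ≠ 0) :
    ∀ lam : ℂ, sqSingVals !![α, r; 0, β] lam 0 ≠ sqSingVals !![α, r; 0, β] lam 1 := by
  intro lam h
  set A := lam • (1 : Matrix (Fin 2) (Fin 2) ℂ) - !![α, r; 0, β] with hAdef
  have hA := Matrix.isHermitian_conjTranspose_mul_self A
  have hc := herm_const _ hA h
  set c : ℂ := ((hA.eigenvalues 0 : ℝ) : ℂ)
  -- entries of AᴴA
  have h01 : (Aᴴ * A) 0 1 = 0 := by rw [hc]; simp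
  have h00 : (Aᴴ * A) 0 0 = c := by rw [hc]; simp
  have h11 : (Aᴴ * A) 1 1 = c := by rw [hc]; simp
  have hA01 : (Aᴴ * A) 0 1 = star (α - lam) * r := by
    simp [hAdef, Matrix.mul_apply, Fin.sum_univ_two, Matrix.one_apply]
    ring
  have hla : lam = α := by
    rw [hA01] at h01
    rcases mul_eq_zero.mp h01 with h' | h'
    · have := star_eq_zero.mp h'
      linear_combination -this
    · exact absurd h' hr
  have hA00 : (Aᴴ * A) 0 0 = 0 := by
    simp [hAdef, Matrix.mul_apply, Fin.sum_univ_two, Matrix.one_apply, hla]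
  have hA11 : (Aᴴ * A) 1 1 = star r * r + star (lam - β) * (lam - β) := by
    simp [hAdef, Matrix.mul_apply, Fin.sum_univ_two, Matrix.one_apply]
  have : star r * r + star (lam - β) * (lam - β) = 0 := by
    rw [← hA11, h11, ← h00, hA00]
  have h1 : (0:ℝ) ≤ Complex.normSq r := Complex.normSq_nonneg r
  have h2 : (0:ℝ) ≤ Complex.normSq (lam - β) := Complex.normSq_nonneg _
  have hre : Complex.normSq r + Complex.normSq (lam - β) = 0 := by
    rw [show (star r : ℂ) = (starRingEnd ℂ) r from rfl,
      show (star (lam - β) : ℂ) = (starRingEnd ℂ) (lam - β) from rfl,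
      ← Complex.normSq_eq_conj_mul_self, ← Complex.normSq_eq_conj_mul_self] at this
    exact_mod_cast this
  have : Complex.normSq r = 0 := by linarith
  exact hr (Complex.normSq_eq_zero.mp this)
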